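/- For f(x,u,p,q) = −x·p⁴q³ + u·p³q³ on the open set {(x,u,p,q) : p ≠ 0, q ≠ 0}, the invariants evaluate to I₁ = 3p³q²(px − u), I₂ = 0, I₃ = −p³q³ ≠ 0, J₃ = −pq, I₄ = −p, I₅ = −1/p², I₇ = 0, Q = 0 and K = −3/p⁴; all the relative invariants I₆, I₈, I₁₀, I₁₁, I₁₂, I₁₃, I₁₄, I₁₅ vanish identically, and D̂ₓK = 12q/p⁵ ≠ 0. -/

import Mathlib

/-!
Invariants of the third-order ODE `u''' = f(x, u, u', u'')` under contact
transformations, following Cartan's equivalence method.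
We write `p = u'`, `q = u''`.
-/

noncomputable section

/-- The real cube root of a real number. -/
def cbrt (y : ℝ) : ℝ := if 0 ≤ y then y ^ ((1 : ℝ)/3) else -((-y) ^ ((1 : ℝ)/3))

/-- Functions of `(x, u, p, q)`. -/
abbrev Fn : Type := ℝ → ℝ → ℝ → ℝ → ℝ

/-- Functions of `(x, u, p)`. -/
abbrev Fn3 : Type := ℝ → ℝ → ℝ → ℝ

/-- Partial derivative in `x` of a function of `(x,u,p,q)`. -/
def pdx (g : Fn) : Fn := fun x u p q => deriv (fun t => g t u p q) x
/-- Partial derivative in `u` of a function of `(x,u,p,q)`. -/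
def pdu (g : Fn) : Fn := fun x u p q => deriv (fun t => g x t p q) u
/-- Partial derivative in `p` of a function of `(x,u,p,q)`. -/
def pdp (g : Fn) : Fn := fun x u p q => deriv (fun t => g x u t q) p
/-- Partial derivative in `q` of a function of `(x,u,p,q)`. -/
def pdq (g : Fn) : Fn := fun x u p q => deriv (fun t => g x u p t) q

/-- Partial derivative in `x` of a function of `(x,u,p)`. -/
def pdx3 (g : Fn3) : Fn3 := fun x u p => deriv (fun t => g t u p) x
/-- Partial derivative in `u` of a function of `(x,u,p)`. -/
def pdu3 (g : Fn3) : Fn3 := fun x u p => deriv (fun t => g x t p) u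
/-- Partial derivative in `p` of a function of `(x,u,p)`. -/
def pdp3 (g : Fn3) : Fn3 := fun x u p => deriv (fun t => g x u t) p

/-- Lift of a function of `(x,u,p)` to a function of `(x,u,p,q)`, constant in `q`. -/
def lift (g : Fn3) : Fn := fun x u p _ => g x u p

/-- The total derivative operator `D̂ₓ = ∂ₓ + p ∂ᵤ + q ∂ₚ + f ∂_q` of the ODE `u''' = f`. -/
def Dhat (f g : Fn) : Fn := fun x u p q =>
  pdx g x u p q + p * pdu g x u p q + q * pdp g x u p q + f x u p q * pdq g x u p q

/-- `I₁ = −f_q`. -/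
def I1 (f : Fn) : Fn := fun x u p q => -(pdq f x u p q)

/-- `I₂ = −(2/9)I₁² − f_p − (1/3)D̂ₓI₁`. -/
def I2 (f : Fn) : Fn := fun x u p q =>
  -(2/9) * (I1 f x u p q)^2 - pdp f x u p q - (1/3) * Dhat f (I1 f) x u p q

/-- `I₃ = −(1/3)I₁I₂ − f_u − (1/2)D̂ₓI₂`. -/
def I3 (f : Fn) : Fn := fun x u p q =>
  -(1/3) * I1 f x u p q * I2 f x u p q - pdu f x u p q - (1/2) * Dhat f (I2 f) x u p q

/-- `J₃`, the real cube root of `I₃`. -/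
def J3 (f : Fn) : Fn := fun x u p q => cbrt (I3 f x u p q)

/-- `I₄ = (J₃)_q`. -/
def I4 (f : Fn) : Fn := pdq (J3 f)

/-- `I₅ = (1/(3J₃²))(I₁J₃ + 3D̂ₓJ₃)`. -/
def I5 (f : Fn) : Fn := fun x u p q =>
  (1 / (3 * (J3 f x u p q)^2)) * (I1 f x u p q * J3 f x u p q + 3 * Dhat f (J3 f) x u p q)

/-- `I₇ = −(I₅)_q J₃²`. -/
def I7 (f : Fn) : Fn := fun x u p q => -(pdq (I5 f) x u p q) * (J3 f x u p q)^2

/-- `I₉ = 2J₃D̂ₓI₅ − I₂ + J₃²I₅²`. -/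
def I9 (f : Fn) : Fn := fun x u p q =>
  2 * J3 f x u p q * Dhat f (I5 f) x u p q - I2 f x u p q
    + (J3 f x u p q)^2 * (I5 f x u p q)^2

/-- `K = I₉/J₃²`. -/
def Kinv (f : Fn) : Fn := fun x u p q => I9 f x u p q / (J3 f x u p q)^2

/-- `Q = −(I₁I₇ + 3J₃²(I₅)_p + 3(J₃)_u − 3J₃I₄D̂ₓI₅)/(3J₃)`. -/
def Qinv (f : Fn) : Fn := fun x u p q =>
  -(I1 f x u p q * I7 f x u p q + 3 * (J3 f x u p q)^2 * pdp (I5 f) x u p q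
      + 3 * pdu (J3 f) x u p q
      - 3 * J3 f x u p q * I4 f x u p q * Dhat f (I5 f) x u p q)
    / (3 * J3 f x u p q)

/-- `I₆ = (2/3)(J₃)_q I₁ − (1/3)(I₁)_q J₃ − 2(J₃)_p + 2J₃I₄I₅`. -/
def I6 (f : Fn) : Fn := fun x u p q =>
  (2/3) * pdq (J3 f) x u p q * I1 f x u p q - (1/3) * pdq (I1 f) x u p q * J3 f x u p q
    - 2 * pdp (J3 f) x u p q + 2 * J3 f x u p q * I4 f x u p q * I5 f x u p q

/-- `I₈ = (I₄)_q`. -/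
def I8 (f : Fn) : Fn := pdq (I4 f)

/-- `I₁₀ = I₄D̂ₓI₇ − J₃(I₇)_p + J₃²(I₄/J₃)_u`. -/
def I10 (f : Fn) : Fn := fun x u p q =>
  I4 f x u p q * Dhat f (I7 f) x u p q - J3 f x u p q * pdp (I7 f) x u p q
    + (J3 f x u p q)^2 *
      pdu (fun x' u' p' q' => I4 f x' u' p' q' / J3 f x' u' p' q') x u p q

/-- `I₁₁ = (J₃)_u − D̂ₓI₇`. -/
def I11 (f : Fn) : Fn := fun x u p q =>
  pdu (J3 f) x u p q - Dhat f (I7 f) x u p q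

/-- `I₁₂`. -/
def I12 (f : Fn) : Fn := fun x u p q =>
  6 * I1 f x u p q * J3 f x u p q *
      (I5 f x u p q * I7 f x u p q - I4 f x u p q * Dhat f (I5 f) x u p q)
    - 18 * (J3 f x u p q)^3 * I4 f x u p q
    + 6 * pdp (I5 f) x u p q * I1 f x u p q * (J3 f x u p q)^2
    - 18 * I2 f x u p q * J3 f x u p q * I4 f x u p q * I5 f x u p q
    - 18 * J3 f x u p q * I7 f x u p q * Dhat f (I5 f) x u p q
    + 18 * (J3 f x u p q)^2 * pdu (I5 f) x u p q
    + 18 * I2 f x u p q * Dhat f (I4 f) x u p q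
    + 2 * (I1 f x u p q)^2 * I7 f x u p q
    - 9 * pdp (I2 f) x u p q * J3 f x u p q
    + 6 * (J3 f x u p q)^2 *
        pdu (fun x' u' p' q' => I1 f x' u' p' q' / J3 f x' u' p' q') x u p q
    + 36 * I2 f x u p q * I7 f x u p q

/-- `I₁₃ = (J₃I₄I₅ − I₇)D̂ₓK + J₃K_u − J₃²I₅K_p`. -/
def I13 (f : Fn) : Fn := fun x u p q =>
  (J3 f x u p q * I4 f x u p q * I5 f x u p q - I7 f x u p q) * Dhat f (Kinv f) x u p q
    + J3 f x u p q * pdu (Kinv f) x u p q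
    - (J3 f x u p q)^2 * I5 f x u p q * pdp (Kinv f) x u p q

/-- `I₁₄ = K_q`. -/
def I14 (f : Fn) : Fn := pdq (Kinv f)

/-- `I₁₅ = I₄D̂ₓK − J₃K_p`. -/
def I15 (f : Fn) : Fn := fun x u p q =>
  I4 f x u p q * Dhat f (Kinv f) x u p q - J3 f x u p q * pdp (Kinv f) x u p q

/-! ### Auxiliary lemmas for the example -/

lemma cbrt_cube (t : ℝ) : cbrt (t^3) = t := by
  rcases le_or_gt 0 t with ht | ht
  · rw [cbrt, if_pos (pow_nonneg ht 3)]
    rw [← Real.rpow_natCast t 3, ← Real.rpow_mul ht]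
    norm_num
  · have h3 : t^3 < 0 := Odd.pow_neg ⟨1, by norm_num⟩ ht
    rw [cbrt, if_neg (by linarith)]
    rw [show -(t^3) = (-t)^3 by ring, ← Real.rpow_natCast (-t) 3,
      ← Real.rpow_mul (by linarith)]
    norm_num

lemma deriv_poly4 (a b c d e t : ℝ) :
    deriv (fun s : ℝ => a*s^4 + b*s^3 + c*s^2 + d*s + e) t
      = 4*a*t^3 + 3*b*t^2 + 2*c*t + d := by
  have h : HasDerivAt (fun s : ℝ => a*s^4 + b*s^3 + c*s^2 + d*s + e)
      (4*a*t^3 + 3*b*t^2 + 2*c*t + d) t := by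
    have h4 := (hasDerivAt_pow 4 t).const_mul a
    have h3 := (hasDerivAt_pow 3 t).const_mul b
    have h2 := (hasDerivAt_pow 2 t).const_mul c
    have h1 := (hasDerivAt_id t).const_mul d
    have := (((h4.add h3).add h2).add h1).add_const e
    refine this.congr_deriv ?_
    push_cast; ring
  exact h.deriv

lemma deriv_neg_inv_sq (p : ℝ) (hp : p ≠ 0) :
    deriv (fun t : ℝ => -(1/t^2)) p = 2/p^3 := by
  have h := ((hasDerivAt_pow 2 p).inv (pow_ne_zero 2 hp)).neg
  rw [show (fun t : ℝ => -(1/t^2)) = fun t : ℝ => -(t^2)⁻¹ by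
    funext s; rw [one_div], show (fun t : ℝ => -(t^2)⁻¹) = -(fun x : ℝ => x^2)⁻¹ from rfl, h.deriv]
  field_simp; ring

lemma deriv_neg_inv_quartic (p : ℝ) (hp : p ≠ 0) :
    deriv (fun t : ℝ => -(3/t^4)) p = 12/p^5 := by
  have h := (((hasDerivAt_pow 4 p).inv (pow_ne_zero 4 hp)).const_mul 3).neg
  rw [show (fun t : ℝ => -(3/t^4)) = fun t : ℝ => -(3 * (t^4)⁻¹) by
    funext s; rw [div_eq_mul_inv], show (fun t : ℝ => -(3 * (t^4)⁻¹)) = -fun y : ℝ => 3 * (fun x : ℝ => x^4)⁻¹ y from rfl, h.deriv]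
  field_simp; ring

/-- The example right-hand side. -/
def Fex : Fn := fun x u p q => -x * p^4 * q^3 + u * p^3 * q^3

lemma pdxF (x u p q : ℝ) : pdx Fex x u p q = -(p^4*q^3) := by
  show deriv (fun t => Fex t u p q) x = _
  rw [show (fun t => Fex t u p q)
      = fun s : ℝ => 0*s^4 + 0*s^3 + 0*s^2 + (-(p^4*q^3))*s + u*p^3*q^3 from
    funext fun s => by show -s*p^4*q^3 + u*p^3*q^3 = _; ring, deriv_poly4]
  ring

lemma pduF (x u p q : ℝ) : pdu Fex x u p q = p^3*q^3 := by
  show deriv (fun t => Fex x t p q) u = _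
  rw [show (fun t => Fex x t p q)
      = fun s : ℝ => 0*s^4 + 0*s^3 + 0*s^2 + (p^3*q^3)*s + (-x*p^4*q^3) from
    funext fun s => by show -x*p^4*q^3 + s*p^3*q^3 = _; ring, deriv_poly4]
  ring

lemma pdpF (x u p q : ℝ) : pdp Fex x u p q = -4*x*p^3*q^3 + 3*u*p^2*q^3 := by
  show deriv (fun t => Fex x u t q) p = _
  rw [show (fun t => Fex x u t q)
      = fun s : ℝ => (-x*q^3)*s^4 + (u*q^3)*s^3 + 0*s^2 + 0*s + 0 from
    funext fun s => by show -x*s^4*q^3 + u*s^3*q^3 = _; ring, deriv_poly4]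
  ring

lemma pdqF (x u p q : ℝ) : pdq Fex x u p q = 3*u*p^3*q^2 - 3*x*p^4*q^2 := by
  show deriv (fun t => Fex x u p t) q = _
  rw [show (fun t => Fex x u p t)
      = fun s : ℝ => 0*s^4 + (u*p^3 - x*p^4)*s^3 + 0*s^2 + 0*s + 0 from
    funext fun s => by show -x*p^4*s^3 + u*p^3*s^3 = _; ring, deriv_poly4]
  ring

lemma hI1 : I1 Fex = fun x u p q => 3 * p^3 * q^2 * (p*x - u) := by
  funext x u p q
  show -(pdq Fex x u p q) = _
  rw [pdqF]; ring

lemma I1x (x u p q : ℝ) : pdx (I1 Fex) x u p q = 3*p^4*q^2 := by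
  show deriv (fun t => I1 Fex t u p q) x = _
  rw [show (fun t => I1 Fex t u p q)
      = fun s : ℝ => 0*s^4 + 0*s^3 + 0*s^2 + (3*p^4*q^2)*s + (-(3*p^3*q^2*u)) from
    funext fun s => by simp only [hI1]; ring, deriv_poly4]
  ring

lemma I1u (x u p q : ℝ) : pdu (I1 Fex) x u p q = -(3*p^3*q^2) := by
  show deriv (fun t => I1 Fex x t p q) u = _
  rw [show (fun t => I1 Fex x t p q)
      = fun s : ℝ => 0*s^4 + 0*s^3 + 0*s^2 + (-(3*p^3*q^2))*s + 3*p^4*q^2*x from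
    funext fun s => by simp only [hI1]; ring, deriv_poly4]
  ring

lemma I1p (x u p q : ℝ) : pdp (I1 Fex) x u p q = 12*x*q^2*p^3 - 9*u*q^2*p^2 := by
  show deriv (fun t => I1 Fex x u t q) p = _
  rw [show (fun t => I1 Fex x u t q)
      = fun s : ℝ => (3*x*q^2)*s^4 + (-(3*u*q^2))*s^3 + 0*s^2 + 0*s + 0 from
    funext fun s => by simp only [hI1]; ring, deriv_poly4]
  ring

lemma I1q (x u p q : ℝ) : pdq (I1 Fex) x u p q = 6*p^3*q*(p*x - u) := by
  show deriv (fun t => I1 Fex x u p t) q = _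
  rw [show (fun t => I1 Fex x u p t)
      = fun s : ℝ => 0*s^4 + 0*s^3 + (3*p^3*(p*x - u))*s^2 + 0*s + 0 from
    funext fun s => by simp only [hI1]; ring, deriv_poly4]
  ring

lemma hI2 : I2 Fex = fun _ _ _ _ => 0 := by
  funext x u p q
  simp only [I2, Dhat]
  rw [I1x, I1u, I1p, I1q, pdpF]
  simp only [hI1, Fex]
  ring

lemma hI3 : I3 Fex = fun x u p q => -(p^3 * q^3) := by
  funext x u p q
  simp only [I3]
  rw [pduF]
  simp only [hI2, hI1, Dhat, pdx, pdu, pdp, pdq, deriv_const]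
  ring

lemma hJ3 : J3 Fex = fun x u p q => -(p*q) := by
  funext x u p q
  simp only [J3, hI3]
  rw [show -(p^3*q^3) = (-(p*q))^3 by ring, cbrt_cube]

lemma J3x (x u p q : ℝ) : pdx (J3 Fex) x u p q = 0 := by
  show deriv (fun t => J3 Fex t u p q) x = _
  rw [show (fun t => J3 Fex t u p q) = fun _ : ℝ => -(p*q) from
    funext fun s => by simp only [hJ3], deriv_const]

lemma J3u (x u p q : ℝ) : pdu (J3 Fex) x u p q = 0 := by
  show deriv (fun t => J3 Fex x t p q) u = _
  rw [show (fun t => J3 Fex x t p q) = fun _ : ℝ => -(p*q) from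
    funext fun s => by simp only [hJ3], deriv_const]

lemma J3p (x u p q : ℝ) : pdp (J3 Fex) x u p q = -q := by
  show deriv (fun t => J3 Fex x u t q) p = _
  rw [show (fun t => J3 Fex x u t q)
      = fun s : ℝ => 0*s^4 + 0*s^3 + 0*s^2 + (-q)*s + 0 from
    funext fun s => by simp only [hJ3]; ring, deriv_poly4]
  ring

lemma J3q (x u p q : ℝ) : pdq (J3 Fex) x u p q = -p := by
  show deriv (fun t => J3 Fex x u p t) q = _
  rw [show (fun t => J3 Fex x u p t)
      = fun s : ℝ => 0*s^4 + 0*s^3 + 0*s^2 + (-p)*s + 0 from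
    funext fun s => by simp only [hJ3]; ring, deriv_poly4]
  ring

lemma hI4 (x u p q : ℝ) : I4 Fex x u p q = -p := J3q x u p q

lemma hDJ3 (x u p q : ℝ) :
    Dhat Fex (J3 Fex) x u p q = -q^2 + x*p^5*q^3 - u*p^4*q^3 := by
  simp only [Dhat]
  rw [J3x, J3u, J3p, J3q]
  simp only [Fex]; ring

lemma hE (x u p q : ℝ) :
    I1 Fex x u p q * J3 Fex x u p q + 3 * Dhat Fex (J3 Fex) x u p q = -3*q^2 := by
  rw [hDJ3]
  simp only [hI1, hJ3]
  ring

lemma hI5 (x u p q : ℝ) (hq : q ≠ 0) : I5 Fex x u p q = -(1 / p^2) := by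
  simp only [I5]
  rw [hE]
  simp only [hJ3]
  rcases eq_or_ne p 0 with hp | hp
  · subst hp; norm_num
  · field_simp

lemma I5x (x u p q : ℝ) (hq : q ≠ 0) : pdx (I5 Fex) x u p q = 0 := by
  show deriv (fun t => I5 Fex t u p q) x = _
  rw [show (fun t => I5 Fex t u p q) = fun _ : ℝ => -(1/p^2) from
    funext fun s => hI5 s u p q hq, deriv_const]

lemma I5u (x u p q : ℝ) (hq : q ≠ 0) : pdu (I5 Fex) x u p q = 0 := by
  show deriv (fun t => I5 Fex x t p q) u = _
  rw [show (fun t => I5 Fex x t p q) = fun _ : ℝ => -(1/p^2) from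
    funext fun s => hI5 x s p q hq, deriv_const]

lemma I5p (x u p q : ℝ) (hp : p ≠ 0) (hq : q ≠ 0) :
    pdp (I5 Fex) x u p q = 2/p^3 := by
  show deriv (fun t => I5 Fex x u t q) p = _
  rw [show (fun t => I5 Fex x u t q) = fun t : ℝ => -(1/t^2) from
    funext fun s => hI5 x u s q hq]
  exact deriv_neg_inv_sq p hp

lemma I5q (x u p q : ℝ) (hq : q ≠ 0) : pdq (I5 Fex) x u p q = 0 := by
  show deriv (fun t => I5 Fex x u p t) q = _
  have hev : (fun t => I5 Fex x u p t) =ᶠ[nhds q] fun _ : ℝ => -(1/p^2) := by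
    filter_upwards [eventually_ne_nhds hq] with t ht
    exact hI5 x u p t ht
  rw [hev.deriv_eq, deriv_const]

lemma hDI5 (x u p q : ℝ) (hp : p ≠ 0) (hq : q ≠ 0) :
    Dhat Fex (I5 Fex) x u p q = 2*q/p^3 := by
  simp only [Dhat]
  rw [I5x x u p q hq, I5u x u p q hq, I5p x u p q hp hq, I5q x u p q hq]
  ring

lemma hI7 (x u p q : ℝ) (hq : q ≠ 0) : I7 Fex x u p q = 0 := by
  simp only [I7]
  rw [I5q x u p q hq]
  ring

lemma I7x (x u p q : ℝ) (hq : q ≠ 0) : pdx (I7 Fex) x u p q = 0 := by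
  show deriv (fun t => I7 Fex t u p q) x = _
  rw [show (fun t => I7 Fex t u p q) = fun _ : ℝ => (0:ℝ) from
    funext fun s => hI7 s u p q hq, deriv_const]

lemma I7u (x u p q : ℝ) (hq : q ≠ 0) : pdu (I7 Fex) x u p q = 0 := by
  show deriv (fun t => I7 Fex x t p q) u = _
  rw [show (fun t => I7 Fex x t p q) = fun _ : ℝ => (0:ℝ) from
    funext fun s => hI7 x s p q hq, deriv_const]

lemma I7p (x u p q : ℝ) (hq : q ≠ 0) : pdp (I7 Fex) x u p q = 0 := by
  show deriv (fun t => I7 Fex x u t q) p = _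
  rw [show (fun t => I7 Fex x u t q) = fun _ : ℝ => (0:ℝ) from
    funext fun s => hI7 x u s q hq, deriv_const]

lemma I7q (x u p q : ℝ) (hq : q ≠ 0) : pdq (I7 Fex) x u p q = 0 := by
  show deriv (fun t => I7 Fex x u p t) q = _
  have hev : (fun t => I7 Fex x u p t) =ᶠ[nhds q] fun _ : ℝ => (0:ℝ) := by
    filter_upwards [eventually_ne_nhds hq] with t ht
    exact hI7 x u p t ht
  rw [hev.deriv_eq, deriv_const]

lemma hDI7 (x u p q : ℝ) (hq : q ≠ 0) : Dhat Fex (I7 Fex) x u p q = 0 := by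
  simp only [Dhat]
  rw [I7x x u p q hq, I7u x u p q hq, I7p x u p q hq, I7q x u p q hq]
  ring

lemma hK (x u p q : ℝ) (hq : q ≠ 0) : Kinv Fex x u p q = -(3 / p^4) := by
  rcases eq_or_ne p 0 with hp | hp
  · subst hp
    simp only [Kinv, hJ3]
    norm_num
  · simp only [Kinv, I9]
    rw [hDI5 x u p q hp hq, hI5 x u p q hq]
    simp only [hI2, hJ3]
    field_simp; ring

lemma Kx (x u p q : ℝ) (hq : q ≠ 0) : pdx (Kinv Fex) x u p q = 0 := by
  show deriv (fun t => Kinv Fex t u p q) x = _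
  rw [show (fun t => Kinv Fex t u p q) = fun _ : ℝ => -(3/p^4) from
    funext fun s => hK s u p q hq, deriv_const]

lemma Ku (x u p q : ℝ) (hq : q ≠ 0) : pdu (Kinv Fex) x u p q = 0 := by
  show deriv (fun t => Kinv Fex x t p q) u = _
  rw [show (fun t => Kinv Fex x t p q) = fun _ : ℝ => -(3/p^4) from
    funext fun s => hK x s p q hq, deriv_const]

lemma Kp (x u p q : ℝ) (hp : p ≠ 0) (hq : q ≠ 0) :
    pdp (Kinv Fex) x u p q = 12/p^5 := by
  show deriv (fun t => Kinv Fex x u t q) p = _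
  rw [show (fun t => Kinv Fex x u t q) = fun t : ℝ => -(3/t^4) from
    funext fun s => hK x u s q hq]
  exact deriv_neg_inv_quartic p hp

lemma Kq (x u p q : ℝ) (hq : q ≠ 0) : pdq (Kinv Fex) x u p q = 0 := by
  show deriv (fun t => Kinv Fex x u p t) q = _
  have hev : (fun t => Kinv Fex x u p t) =ᶠ[nhds q] fun _ : ℝ => -(3/p^4) := by
    filter_upwards [eventually_ne_nhds hq] with t ht
    exact hK x u p t ht
  rw [hev.deriv_eq, deriv_const]

lemma hDK (x u p q : ℝ) (hp : p ≠ 0) (hq : q ≠ 0) :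
    Dhat Fex (Kinv Fex) x u p q = 12*q/p^5 := by
  simp only [Dhat]
  rw [Kx x u p q hq, Ku x u p q hq, Kp x u p q hp hq, Kq x u p q hq]
  ring

lemma I4x (x u p q : ℝ) : pdx (I4 Fex) x u p q = 0 := by
  show deriv (fun t => I4 Fex t u p q) x = _
  rw [show (fun t => I4 Fex t u p q) = fun _ : ℝ => -p from
    funext fun s => hI4 s u p q, deriv_const]

lemma I4u (x u p q : ℝ) : pdu (I4 Fex) x u p q = 0 := by
  show deriv (fun t => I4 Fex x t p q) u = _
  rw [show (fun t => I4 Fex x t p q) = fun _ : ℝ => -p from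
    funext fun s => hI4 x s p q, deriv_const]

lemma I4p (x u p q : ℝ) : pdp (I4 Fex) x u p q = -1 := by
  show deriv (fun t => I4 Fex x u t q) p = _
  rw [show (fun t => I4 Fex x u t q)
      = fun s : ℝ => 0*s^4 + 0*s^3 + 0*s^2 + (-1)*s + 0 from
    funext fun s => by rw [hI4]; ring, deriv_poly4]
  ring

lemma I4q (x u p q : ℝ) : pdq (I4 Fex) x u p q = 0 := by
  show deriv (fun t => I4 Fex x u p t) q = _
  rw [show (fun t => I4 Fex x u p t) = fun _ : ℝ => -p from
    funext fun s => hI4 x u p s, deriv_const]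

lemma hDI4 (x u p q : ℝ) : Dhat Fex (I4 Fex) x u p q = -q := by
  simp only [Dhat]
  rw [I4x, I4u, I4p, I4q]
  ring

lemma I2p (x u p q : ℝ) : pdp (I2 Fex) x u p q = 0 := by
  show deriv (fun t => I2 Fex x u t q) p = _
  rw [show (fun t => I2 Fex x u t q) = fun _ : ℝ => (0:ℝ) from
    funext fun s => by simp only [hI2], deriv_const]

lemma ratio41u (x u p q : ℝ) :
    pdu (fun x' u' p' q' => I4 Fex x' u' p' q' / J3 Fex x' u' p' q') x u p q = 0 := by
  show deriv (fun t => I4 Fex x t p q / J3 Fex x t p q) u = _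
  rw [show (fun t => I4 Fex x t p q / J3 Fex x t p q)
      = fun _ : ℝ => (-p) / (-(p*q)) from
    funext fun s => by rw [hI4]; simp only [hJ3], deriv_const]

lemma ratio13u (x u p q : ℝ) (hp : p ≠ 0) (hq : q ≠ 0) :
    pdu (fun x' u' p' q' => I1 Fex x' u' p' q' / J3 Fex x' u' p' q') x u p q
      = 3*p^2*q := by
  show deriv (fun t => I1 Fex x t p q / J3 Fex x t p q) u = _
  rw [show (fun t => I1 Fex x t p q / J3 Fex x t p q)
      = fun s : ℝ => 0*s^4 + 0*s^3 + 0*s^2 + (3*p^2*q)*s + (-(3*p^3*q*x)) from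
    funext fun s => by
      simp only [hI1, hJ3]
      field_simp
      ring, deriv_poly4]
  ring

/-- For `f(x,u,p,q) = −x·p⁴q³ + u·p³q³` on `{p ≠ 0, q ≠ 0}`, the
invariants evaluate as listed, all the relative invariants
`I₆, I₈, I₁₀, I₁₁, I₁₂, I₁₃, I₁₄, I₁₅` vanish identically, and
`D̂ₓK = 12q/p⁵ ≠ 0`. -/
theorem invariants_of_example2
    (f : Fn) (hfdef : f = fun x u p q => -x * p^4 * q^3 + u * p^3 * q^3) :
    ∀ x u p q : ℝ, p ≠ 0 → q ≠ 0 →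
      I1 f x u p q = 3 * p^3 * q^2 * (p*x - u) ∧
      I2 f x u p q = 0 ∧
      I3 f x u p q = -(p^3 * q^3) ∧
      I3 f x u p q ≠ 0 ∧
      J3 f x u p q = -(p*q) ∧
      I4 f x u p q = -p ∧
      I5 f x u p q = -(1 / p^2) ∧
      I7 f x u p q = 0 ∧
      Qinv f x u p q = 0 ∧
      Kinv f x u p q = -(3 / p^4) ∧
      I6 f x u p q = 0 ∧
      I8 f x u p q = 0 ∧
      I10 f x u p q = 0 ∧
      I11 f x u p q = 0 ∧
      I12 f x u p q = 0 ∧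
      I13 f x u p q = 0 ∧
      I14 f x u p q = 0 ∧
      I15 f x u p q = 0 ∧
      Dhat f (Kinv f) x u p q = 12 * q / p^5 ∧
      Dhat f (Kinv f) x u p q ≠ 0 := by
  have hF : f = Fex := hfdef
  subst hF
  intro x u p q hp hq
  have h1 : I1 Fex x u p q = 3 * p^3 * q^2 * (p*x - u) := by simp only [hI1]
  have h2 : I2 Fex x u p q = 0 := by simp only [hI2]
  have h3 : I3 Fex x u p q = -(p^3 * q^3) := by simp only [hI3]
  have h3' : I3 Fex x u p q ≠ 0 := by
    rw [h3]
    exact neg_ne_zero.mpr (mul_ne_zero (pow_ne_zero 3 hp) (pow_ne_zero 3 hq))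
  have hj : J3 Fex x u p q = -(p*q) := by simp only [hJ3]
  have h4 : I4 Fex x u p q = -p := hI4 x u p q
  have h5 : I5 Fex x u p q = -(1 / p^2) := hI5 x u p q hq
  have h7 : I7 Fex x u p q = 0 := hI7 x u p q hq
  have hQ : Qinv Fex x u p q = 0 := by
    simp only [Qinv]
    rw [h7, I5p x u p q hp hq, J3u, hDI5 x u p q hp hq, h4, h1, hj]
    rw [div_eq_zero_iff]; left
    field_simp
    ring
  have hKv : Kinv Fex x u p q = -(3 / p^4) := hK x u p q hq
  have h6 : I6 Fex x u p q = 0 := by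
    simp only [I6]
    rw [J3q, I1q, J3p, hj, h4, h5, h1]
    field_simp
    ring
  have h8 : I8 Fex x u p q = 0 := I4q x u p q
  have h10 : I10 Fex x u p q = 0 := by
    simp only [I10]
    rw [h4, hDI7 x u p q hq, hj, I7p x u p q hq, ratio41u]
    ring
  have h11 : I11 Fex x u p q = 0 := by
    simp only [I11]
    rw [J3u, hDI7 x u p q hq]
    ring
  have h12 : I12 Fex x u p q = 0 := by
    simp only [I12]
    rw [hDI5 x u p q hp hq, I5p x u p q hp hq, I5u x u p q hq, hDI4, I2p,
      ratio13u x u p q hp hq, h1, hj, h4, h5, h7, h2]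
    field_simp
    ring
  have h13 : I13 Fex x u p q = 0 := by
    simp only [I13]
    rw [hDK x u p q hp hq, Ku x u p q hq, Kp x u p q hp hq, hj, h4, h5, h7]
    ring
  have h14 : I14 Fex x u p q = 0 := Kq x u p q hq
  have h15 : I15 Fex x u p q = 0 := by
    simp only [I15]
    rw [h4, hDK x u p q hp hq, hj, Kp x u p q hp hq]
    ring
  have hDKv : Dhat Fex (Kinv Fex) x u p q = 12 * q / p^5 := by
    rw [hDK x u p q hp hq]
  have hne : Dhat Fex (Kinv Fex) x u p q ≠ 0 := by
    rw [hDKv]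
    exact div_ne_zero (mul_ne_zero (by norm_num) hq) (pow_ne_zero 5 hp)
  exact ⟨h1, h2, h3, h3', hj, h4, h5, h7, hQ, hKv, h6, h8, h10, h11, h12, h13,
    h14, h15, hDKv, hne⟩

end
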